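/- Let Γ be a finite multigraph, s a counting function on Γ, and M any marking of the fattened graph Γ_fat compatible with s. Then there exists a flow in the network N_{Γ,s} whose value equals cr(M); in particular cr(M) ≤ X_{Γ,s}, the maximal flow value of N_{Γ,s}. -/

import Mathlib

/-- A finite multigraph: finite vertex and edge types, each edge has an
ordered pair of (possibly equal) endpoints. -/
structure Multigraph where
  V : Type
  E : Type
  [fintV : Fintype V]
  [fintE : Fintype E]
  [decV : DecidableEq V]
  [decE : DecidableEq E]
  ends : E → V × V

attribute [instance] Multigraph.fintV Multigraph.fintE Multigraph.decV Multigraph.decE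

namespace Multigraph

variable (G : Multigraph)

/-- A half-edge of `G`: each edge `e` contributes the two half-edges
`(e, false)` (at the first endpoint) and `(e, true)` (at the second endpoint). -/
abbrev Half := G.E × Bool

/-- The vertex at which a half-edge sits. -/
def vertexOf (h : G.Half) : G.V := if h.2 then (G.ends h.1).2 else (G.ends h.1).1

/-- The degree of a vertex: the number of half-edges at it (loops count twice). -/
def deg (v : G.V) : ℕ := (Finset.univ.filter fun h : G.Half => G.vertexOf h = v).card

/-- A marking `M` (a set of half-edges) is compatible with the counting function `s`
if it contains exactly `s v` half-edges at each vertex `v`. -/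
def Compatible (s : G.V → ℕ) (M : Finset G.Half) : Prop :=
  ∀ v : G.V, (M.filter fun h : G.Half => G.vertexOf h = v).card = s v

/-- The number of crossings of a marking `M`: the number of edges having exactly one
of their two half-edges in `M`. -/
def cr (M : Finset G.Half) : ℕ :=
  (Finset.univ.filter fun e : G.E =>
    ((e, false) ∈ M ∧ (e, true) ∉ M) ∨ ((e, false) ∉ M ∧ (e, true) ∈ M)).card

/-- The area `|∂S|` of the pair `(G, s)`: the maximum number of crossings over
all markings compatible with `s`. -/
noncomputable def area (s : G.V → ℕ) : ℕ :=
  sSup {k : ℕ | ∃ M : Finset G.Half, G.Compatible s M ∧ G.cr M = k}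

/-- Nodes of the network `N_{Γ,s}`: the vertices of `G` together with a
source (`Sum.inr true`) and a sink (`Sum.inr false`). -/
abbrev Node := G.V ⊕ Bool

/-- The source of the network. -/
def source : G.Node := Sum.inr true

/-- The sink of the network. -/
def sink : G.Node := Sum.inr false

/-- The number of edges of `G` joining `v` and `w`. -/
def edgesBetween (v w : G.V) : ℕ :=
  (Finset.univ.filter fun e : G.E => G.ends e = (v, w) ∨ G.ends e = (w, v)).card

/-- The capacities of the network `N_{Γ,s}`: `t v = deg v - s v` from the source to `v`,
`s v` from `v` to the sink, the number of edges between `v` and `w` for distinct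
vertices `v, w`, and `0` otherwise. -/
def cap (s : G.V → ℕ) : G.Node → G.Node → ℕ
  | Sum.inr true, Sum.inl v => G.deg v - s v
  | Sum.inl v, Sum.inr false => s v
  | Sum.inl v, Sum.inl w => if v = w then 0 else G.edgesBetween v w
  | _, _ => 0

/-- A flow in the network `N_{Γ,s}`: dominated by the capacities, and the inflow equals
the outflow at every node of `V`. -/
def IsFlow (s : G.V → ℕ) (f : G.Node → G.Node → ℕ) : Prop :=
  (∀ x y : G.Node, f x y ≤ G.cap s x y) ∧
    ∀ v : G.V, (∑ x : G.Node, f x (Sum.inl v)) = ∑ x : G.Node, f (Sum.inl v) x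

/-- The value of a flow: the total flow out of the source. -/
def flowValue (f : G.Node → G.Node → ℕ) : ℕ := ∑ x : G.Node, f G.source x

/-- The maximal flow value `X_{Γ,s}` of the network `N_{Γ,s}`. -/
noncomputable def maxFlow (s : G.V → ℕ) : ℕ :=
  sSup {k : ℕ | ∃ f : G.Node → G.Node → ℕ, G.IsFlow s f ∧ G.flowValue f = k}

end Multigraph


section Aux

namespace Multigraph

variable (G : Multigraph) (M : Finset G.Half)

/-- The set of crossing edges of the marking `M`. -/
def crSet : Finset G.E :=
  Finset.univ.filter fun e : G.E =>
    ((e, false) ∈ M ∧ (e, true) ∉ M) ∨ ((e, false) ∉ M ∧ (e, true) ∈ M)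

lemma mem_crSet {e : G.E} :
    e ∈ G.crSet M ↔
      (((e, false) ∈ M ∧ (e, true) ∉ M) ∨ ((e, false) ∉ M ∧ (e, true) ∈ M)) := by
  simp [crSet]

lemma crSet_card : (G.crSet M).card = G.cr M := rfl

/-- The marked half of a crossing edge. -/
def mh (e : G.E) : G.Half := if (e, true) ∈ M then (e, true) else (e, false)

/-- The unmarked half of a crossing edge. -/
def uh (e : G.E) : G.Half := if (e, true) ∈ M then (e, false) else (e, true)

/-- The vertex of the marked half. -/
def mkV (e : G.E) : G.V := G.vertexOf (G.mh M e)

/-- The vertex of the unmarked half. -/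
def umV (e : G.E) : G.V := G.vertexOf (G.uh M e)

lemma mh_fst (e : G.E) : (G.mh M e).1 = e := by unfold mh; split <;> rfl

lemma uh_fst (e : G.E) : (G.uh M e).1 = e := by unfold uh; split <;> rfl

lemma mh_mem {e : G.E} (he : e ∈ G.crSet M) : G.mh M e ∈ M := by
  have h := (G.mem_crSet M).mp he
  unfold mh; split <;> tauto

lemma uh_not_mem {e : G.E} (he : e ∈ G.crSet M) : G.uh M e ∉ M := by
  have h := (G.mem_crSet M).mp he
  unfold uh; split <;> tauto

variable (s : G.V → ℕ)

lemma card_marked (hM : G.Compatible s M) (v : G.V) :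
    (Finset.univ.filter fun h : G.Half => G.vertexOf h = v ∧ h ∈ M).card = s v := by
  rw [← hM v]
  congr 1
  ext h
  simp [and_comm]

lemma card_unmarked (hM : G.Compatible s M) (v : G.V) :
    (Finset.univ.filter fun h : G.Half => G.vertexOf h = v ∧ h ∉ M).card
      = G.deg v - s v := by
  have hsplit := Finset.card_filter_add_card_filter_not
    (s := Finset.univ.filter fun h : G.Half => G.vertexOf h = v)
    (p := fun h : G.Half => h ∈ M)
  rw [Finset.filter_filter, Finset.filter_filter] at hsplit
  have hm := G.card_marked M s hM v
  have : (Finset.univ.filter fun h : G.Half => G.vertexOf h = v).card = G.deg v := rfl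
  omega

lemma cap_src (hM : G.Compatible s M) (v : G.V) :
    ((G.crSet M).filter fun e => G.umV M e = v).card ≤ G.deg v - s v := by
  rw [← G.card_unmarked M s hM v]
  apply Finset.card_le_card_of_injOn (G.uh M)
  · intro e he
    rw [Finset.mem_coe, Finset.mem_filter] at he
    rw [Finset.mem_coe, Finset.mem_filter]
    exact ⟨Finset.mem_univ _, he.2, G.uh_not_mem M he.1⟩
  · intro e he e' he' h
    have := congrArg Prod.fst h
    rwa [G.uh_fst, G.uh_fst] at this

lemma cap_snk (hM : G.Compatible s M) (v : G.V) :
    ((G.crSet M).filter fun e => G.mkV M e = v).card ≤ s v := by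
  rw [← G.card_marked M s hM v]
  apply Finset.card_le_card_of_injOn (G.mh M)
  · intro e he
    rw [Finset.mem_coe, Finset.mem_filter] at he
    rw [Finset.mem_coe, Finset.mem_filter]
    exact ⟨Finset.mem_univ _, he.2, G.mh_mem M he.1⟩
  · intro e he e' he' h
    have := congrArg Prod.fst h
    rwa [G.mh_fst, G.mh_fst] at this

lemma cap_mid (v w : G.V) :
    ((G.crSet M).filter fun e => G.umV M e = v ∧ G.mkV M e = w).card
      ≤ G.edgesBetween v w := by
  apply Finset.card_le_card
  intro e he
  rw [Finset.mem_filter] at he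
  obtain ⟨-, huv, hmw⟩ := he
  rw [Finset.mem_filter]
  refine ⟨Finset.mem_univ _, ?_⟩
  unfold umV uh at huv
  unfold mkV mh at hmw
  by_cases h : (e, true) ∈ M
  · rw [if_pos h] at huv hmw
    left
    have h1 : (G.ends e).1 = v := huv
    have h2 : (G.ends e).2 = w := hmw
    exact Prod.ext h1 h2
  · rw [if_neg h] at huv hmw
    right
    have h1 : (G.ends e).1 = w := hmw
    have h2 : (G.ends e).2 = v := huv
    exact Prod.ext h1 h2

/-- The flow constructed from the marking `M`. -/
def mflow : G.Node → G.Node → ℕ := fun x y =>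
  match x, y with
  | Sum.inr true, Sum.inl v => ((G.crSet M).filter fun e => G.umV M e = v).card
  | Sum.inl v, Sum.inr false => ((G.crSet M).filter fun e => G.mkV M e = v).card
  | Sum.inl v, Sum.inl w =>
      if v = w then 0
      else ((G.crSet M).filter fun e => G.umV M e = v ∧ G.mkV M e = w).card
  | _, _ => 0

lemma mflow_src_app (v : G.V) : G.mflow M (Sum.inr true) (Sum.inl v)
    = ((G.crSet M).filter fun e => G.umV M e = v).card := rfl

lemma mflow_snk_app (v : G.V) : G.mflow M (Sum.inl v) (Sum.inr false)
    = ((G.crSet M).filter fun e => G.mkV M e = v).card := rfl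

lemma mflow_mid_app (v w : G.V) : G.mflow M (Sum.inl v) (Sum.inl w)
    = if v = w then 0
      else ((G.crSet M).filter fun e => G.umV M e = v ∧ G.mkV M e = w).card := rfl

lemma mflow_zero1 (v : G.V) : G.mflow M (Sum.inl v) (Sum.inr true) = 0 := rfl

lemma mflow_zero2 (v : G.V) : G.mflow M (Sum.inr false) (Sum.inl v) = 0 := rfl

lemma mflow_zero3 (b c : Bool) : G.mflow M (Sum.inr b) (Sum.inr c) = 0 := by
  cases b <;> cases c <;> rfl

lemma cap_mid_app (s : G.V → ℕ) (v w : G.V) :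
    G.cap s (Sum.inl v) (Sum.inl w) = if v = w then 0 else G.edgesBetween v w := rfl

lemma sum_fiber (T : Finset G.E) (g : G.E → G.V) :
    ∑ v : G.V, (T.filter fun e => g e = v).card = T.card :=
  (Finset.card_eq_sum_card_fiberwise (fun e _ => Finset.mem_univ (g e))).symm

lemma sum_ite_card (T : Finset G.E) (v : G.V) (p q : G.E → G.V) :
    (∑ w : G.V, if w = v then 0 else (T.filter fun e => p e = w ∧ q e = v).card)
      = (T.filter fun e => q e = v ∧ p e ≠ v).card := by
  rw [← G.sum_fiber (T.filter fun e => q e = v ∧ p e ≠ v) p]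
  apply Finset.sum_congr rfl
  intro w _
  rw [Finset.filter_filter]
  split
  · rename_i h
    subst h
    rw [eq_comm, Finset.card_eq_zero, Finset.eq_empty_iff_forall_notMem]
    intro e he
    rw [Finset.mem_filter] at he
    tauto
  · rename_i h
    congr 1
    ext e
    simp only [Finset.mem_filter]
    constructor
    · rintro ⟨he, hp, hq⟩
      exact ⟨he, ⟨hq, hp ▸ h⟩, hp⟩
    · rintro ⟨he, ⟨hq, -⟩, hp⟩
      exact ⟨he, hp, hq⟩

lemma card_split (T : Finset G.E) (a b : G.E → Prop)
    [DecidablePred a] [DecidablePred b] :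
    (T.filter fun e => a e).card
      = (T.filter fun e => a e ∧ b e).card + (T.filter fun e => a e ∧ ¬ b e).card := by
  rw [← Finset.filter_filter, ← Finset.filter_filter]
  exact (Finset.card_filter_add_card_filter_not
    (s := T.filter fun e => a e) (p := fun e => b e)).symm

lemma mflow_isFlow (hM : G.Compatible s M) : G.IsFlow s (G.mflow M) := by
  constructor
  · rintro (x | b) (y | c)
    · rw [G.mflow_mid_app M, G.cap_mid_app s]
      by_cases h : x = y
      · rw [if_pos h, if_pos h]
      · rw [if_neg h, if_neg h]
        exact G.cap_mid M x y
    · cases c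
      · exact G.cap_snk M s hM x
      · exact Nat.zero_le _
    · cases b
      · exact Nat.zero_le _
      · exact G.cap_src M s hM y
    · cases b <;> cases c <;> exact Nat.zero_le _
  · intro v
    rw [Fintype.sum_sum_type, Fintype.sum_sum_type]
    have h1 : (∑ b : Bool, G.mflow M (Sum.inr b) (Sum.inl v))
        = ((G.crSet M).filter fun e => G.umV M e = v).card := by
      rw [Fintype.sum_bool, G.mflow_src_app M, G.mflow_zero2 M, Nat.add_zero]
    have h2 : (∑ b : Bool, G.mflow M (Sum.inl v) (Sum.inr b))
        = ((G.crSet M).filter fun e => G.mkV M e = v).card := by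
      rw [Fintype.sum_bool, G.mflow_snk_app M, G.mflow_zero1 M, Nat.zero_add]
    rw [h1, h2]
    have h3 : (∑ w : G.V, G.mflow M (Sum.inl w) (Sum.inl v))
        = ((G.crSet M).filter fun e => G.mkV M e = v ∧ G.umV M e ≠ v).card := by
      rw [← G.sum_ite_card (G.crSet M) v (G.umV M) (G.mkV M)]
      exact Finset.sum_congr rfl fun w _ => G.mflow_mid_app M w v
    have h4 : (∑ w : G.V, G.mflow M (Sum.inl v) (Sum.inl w))
        = ((G.crSet M).filter fun e => G.umV M e = v ∧ G.mkV M e ≠ v).card := by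
      rw [← G.sum_ite_card (G.crSet M) v (G.mkV M) (G.umV M)]
      apply Finset.sum_congr rfl
      intro w _
      rw [G.mflow_mid_app M]
      by_cases h : v = w
      · rw [if_pos h, if_pos h.symm]
      · rw [if_neg h, if_neg (Ne.symm h)]
        congr 1
        ext e
        simp only [Finset.mem_filter, and_comm]
    rw [h3, h4]
    have e1 := G.card_split (G.crSet M) (fun e => G.umV M e = v) (fun e => G.mkV M e = v)
    have e2 := G.card_split (G.crSet M) (fun e => G.mkV M e = v) (fun e => G.umV M e = v)
    have e3 : ((G.crSet M).filter fun e => G.umV M e = v ∧ G.mkV M e = v).card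
        = ((G.crSet M).filter fun e => G.mkV M e = v ∧ G.umV M e = v).card := by
      congr 1
      ext e
      simp only [Finset.mem_filter, and_comm]
    simp only [ne_eq] at h3 h4 e1 e2 e3 ⊢
    omega

lemma mflow_value : G.flowValue (G.mflow M) = G.cr M := by
  show (∑ x : G.Node, G.mflow M (Sum.inr true) x) = G.cr M
  rw [Fintype.sum_sum_type]
  have h2 : (∑ b : Bool, G.mflow M (Sum.inr true) (Sum.inr b)) = 0 := by
    rw [Fintype.sum_bool, G.mflow_zero3 M, G.mflow_zero3 M]
  rw [h2, Nat.add_zero, ← G.crSet_card M, ← G.sum_fiber (G.crSet M) (G.umV M)]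
  exact Finset.sum_congr rfl fun v _ => G.mflow_src_app M v

lemma flowValue_bdd (f : G.Node → G.Node → ℕ) (hf : G.IsFlow s f) :
    G.flowValue f ≤ ∑ x : G.Node, G.cap s G.source x :=
  Finset.sum_le_sum fun x _ => hf.1 G.source x

end Multigraph

end Aux

/-- For any compatible marking `M` there is a flow in the network
`N_{Γ,s}` whose value equals `cr M`; in particular `cr M ≤ X_{Γ,s}`. -/
theorem flow_of_marking (G : Multigraph) (s : G.V → ℕ)
    (hs : ∀ v : G.V, s v ≤ G.deg v)
    (M : Finset G.Half) (hM : G.Compatible s M) :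
    (∃ f : G.Node → G.Node → ℕ, G.IsFlow s f ∧ G.flowValue f = G.cr M) ∧
      G.cr M ≤ G.maxFlow s := by
  classical
  have hflow := G.mflow_isFlow M s hM
  have hval := G.mflow_value M
  refine ⟨⟨G.mflow M, hflow, hval⟩, ?_⟩
  have hmem : G.cr M ∈ {k : ℕ | ∃ f : G.Node → G.Node → ℕ, G.IsFlow s f ∧ G.flowValue f = k} :=
    ⟨G.mflow M, hflow, hval⟩
  exact le_csSup ⟨∑ x : G.Node, G.cap s G.source x,
    fun k hk => by obtain ⟨f, hf, rfl⟩ := hk; exact G.flowValue_bdd s f hf⟩ hmem
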